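/- For every d ≥ 1 and γ > 0 there exists a constant C = C(γ,d) < ∞ such that for every bounded continuous φ : ℝ^d → [0,∞) and every x ∈ ℝ^d, sup_{t>0} e^{−γt} ∫_{ℝ^d} (4πt)^{−d/2} exp(−‖y‖²/(4t)) φ(x+y) dy ≤ sup{ φ(z) : ‖z−x‖ ≤ 1 } + C ∫_{ℝ^d} φ(x+y) exp(−√γ ‖y‖) dy. -/

import Mathlib

open Real
open MeasureTheory

lemma aux_pow_exp (n : ℕ) {x : ℝ} (hx : 0 ≤ x) : x ^ n * Real.exp (-x) ≤ n.factorial := by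
  have h := Real.pow_div_factorial_le_exp (x := x) hx n
  have hf : (0:ℝ) < n.factorial := by positivity
  have hex : (0:ℝ) < Real.exp x := Real.exp_pos x
  rw [div_le_iff₀ hf] at h
  rw [Real.exp_neg]
  rw [mul_inv_le_iff₀ hex]
  linarith [h]

lemma aux_int_exp (d : ℕ) {c : ℝ} (hc : 0 < c) :
    Integrable (fun y : EuclideanSpace ℝ (Fin d) ↦ Real.exp (-c * ‖y‖)) := by
  have hdim : (Module.finrank ℝ (EuclideanSpace ℝ (Fin d)) : ℝ) < ((d+1 : ℕ) : ℝ) := by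
    simp [finrank_euclideanSpace_fin]
  have hbase := integrable_one_add_norm (E := EuclideanSpace ℝ (Fin d)) (r := ((d+1:ℕ):ℝ)) (μ := volume) hdim
  refine (hbase.const_mul (Real.exp c * (d+1).factorial / c ^ (d+1))).mono'
    ((Real.continuous_exp.comp ((continuous_const.mul continuous_norm))).aestronglyMeasurable) ?_
  filter_upwards with y
  have h1 : (0:ℝ) < 1 + ‖y‖ := by positivity
  rw [Real.norm_eq_abs, abs_of_nonneg (Real.exp_nonneg _)]
  have h2 : ((1 + ‖y‖) : ℝ) ^ (-((d+1:ℕ)):ℝ) = ((1 + ‖y‖) ^ (d+1))⁻¹ := by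
    rw [Real.rpow_neg h1.le, Real.rpow_natCast]
  rw [h2]
  have hp1 : (0:ℝ) < (1 + ‖y‖) ^ (d+1) := by positivity
  have hp2 : (0:ℝ) < c ^ (d+1) := by positivity
  have key2 : c ^ (d+1) * (1 + ‖y‖) ^ (d+1) * Real.exp (-c * ‖y‖) ≤
      ((d+1).factorial : ℝ) * Real.exp c := by
    have k1 : (c * (1 + ‖y‖)) ^ (d+1) * Real.exp (-(c * (1 + ‖y‖))) ≤ (d+1).factorial :=
      aux_pow_exp (d+1) (by positivity)
    have hee : Real.exp (-c * ‖y‖) = Real.exp (-(c * (1 + ‖y‖))) * Real.exp c := by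
      rw [← Real.exp_add]; ring_nf
    rw [hee]
    calc c ^ (d+1) * (1 + ‖y‖) ^ (d+1) * (Real.exp (-(c * (1 + ‖y‖))) * Real.exp c)
        = (c ^ (d+1) * (1 + ‖y‖) ^ (d+1) * Real.exp (-(c * (1 + ‖y‖)))) * Real.exp c := by ring
      _ ≤ ((d+1).factorial : ℝ) * Real.exp c := by
          apply mul_le_mul_of_nonneg_right _ (Real.exp_pos c).le
          rw [← mul_pow]; exact k1
  rw [← div_eq_mul_inv, div_div, le_div_iff₀ (by positivity)]
  nlinarith [key2]

lemma aux_rpow_le (d : ℕ) {t : ℝ} (ht : 0 < t) : t ^ (-(d:ℝ)/2) ≤ t⁻¹ ^ d + 1 := by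
  have hd0 : (0:ℝ) ≤ (d:ℝ) := Nat.cast_nonneg d
  have hinv : (0:ℝ) ≤ t⁻¹ ^ d := by positivity
  have heq : t ^ (-(d:ℝ)) = t⁻¹ ^ d := by
    rw [Real.rpow_neg ht.le, Real.rpow_natCast, inv_pow]
  rcases le_total t 1 with h | h
  · have h1 : t ^ (-(d:ℝ)/2) ≤ t ^ (-(d:ℝ)) :=
      Real.rpow_le_rpow_of_exponent_ge ht h (by linarith)
    rw [heq] at h1; linarith
  · have h1 : t ^ (-(d:ℝ)/2) ≤ 1 :=
      Real.rpow_le_one_of_one_le_of_nonpos h (by linarith)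
    linarith

lemma aux_kernel_bound (d : ℕ) {γ : ℝ} (hγ : 0 < γ) :
    ∃ C : ℝ, 0 ≤ C ∧ ∀ t : ℝ, 0 < t → ∀ s : ℝ, 1 ≤ s →
      (4 * π * t) ^ (-(d:ℝ)/2) * Real.exp (-(s - 2 * Real.sqrt γ * t)^2 / (4*t)) ≤ C := by
  set a := Real.sqrt γ with ha
  have ha0 : 0 < a := Real.sqrt_pos.mpr hγ
  have hd0 : (0:ℝ) ≤ (d:ℝ) := Nat.cast_nonneg d
  refine ⟨(4*a)^d + 1 + (16^d * (d.factorial:ℝ) + 1), by positivity, ?_⟩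
  intro t ht s hs
  have h4π : (1:ℝ) ≤ 4 * π := by nlinarith [Real.pi_gt_three]
  have hsplit : (4 * π * t) ^ (-(d:ℝ)/2) ≤ t ^ (-(d:ℝ)/2) := by
    rw [Real.mul_rpow (by positivity) ht.le]
    nth_rewrite 2 [← one_mul (t ^ (-(d:ℝ)/2))]
    exact mul_le_mul_of_nonneg_right
      (Real.rpow_le_one_of_one_le_of_nonpos h4π (by linarith))
      (Real.rpow_nonneg ht.le _)
  have hexple : Real.exp (-(s - 2 * a * t)^2 / (4*t)) ≤ 1 := by
    apply Real.exp_le_one_iff.mpr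
    have : (0:ℝ) ≤ (s - 2*a*t)^2 := sq_nonneg _
    have h4t : (0:ℝ) < 4*t := by linarith
    exact div_nonpos_of_nonpos_of_nonneg (by linarith) h4t.le
  have htpos : (0:ℝ) ≤ t ^ (-(d:ℝ)/2) := Real.rpow_nonneg ht.le _
  rcases le_total (1/(4*a)) t with h | h
  · -- large t
    have h1 : t ^ (-(d:ℝ)/2) ≤ (1/(4*a)) ^ (-(d:ℝ)/2) :=
      Real.rpow_le_rpow_of_nonpos (by positivity) h (by linarith)
    have h2 : ((1/(4*a)):ℝ) ^ (-(d:ℝ)/2) ≤ ((1/(4*a)):ℝ)⁻¹ ^ d + 1 :=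
      aux_rpow_le d (by positivity)
    have h3 : ((1/(4*a)):ℝ)⁻¹ = 4*a := by field_simp
    rw [h3] at h2
    have hfac : (0:ℝ) ≤ 16^d * (d.factorial:ℝ) + 1 := by positivity
    calc (4 * π * t) ^ (-(d:ℝ)/2) * Real.exp (-(s - 2 * a * t)^2 / (4*t))
        ≤ t ^ (-(d:ℝ)/2) * 1 :=
          mul_le_mul hsplit hexple (Real.exp_nonneg _) htpos
      _ = t ^ (-(d:ℝ)/2) := mul_one _
      _ ≤ (4*a)^d + 1 := h1.trans h2
      _ ≤ (4*a)^d + 1 + (16^d * (d.factorial:ℝ) + 1) := by linarith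
  · -- small t
    have h2at : 2*a*t ≤ 1/2 := by
      have : 4*a*t ≤ 1 := by
        have := mul_le_mul_of_nonneg_left h (by positivity : (0:ℝ) ≤ 4*a)
        rw [mul_one_div, mul_div_assoc] at this
        field_simp at this
        linarith [this]
      linarith
    have hsq : (1:ℝ)/4 ≤ (s - 2*a*t)^2 := by nlinarith
    have hexp2 : Real.exp (-(s - 2*a*t)^2 / (4*t)) ≤ Real.exp (-(1/(16*t))) := by
      apply Real.exp_le_exp.mpr
      rw [div_le_iff₀ (by linarith : (0:ℝ) < 4*t)]
      have heq4 : -(1/(16*t)) * (4*t) = -(1/4) := by field_simp; ring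
      rw [heq4]
      nlinarith [hsq]
    have hkey : t⁻¹ ^ d * Real.exp (-(1/(16*t))) ≤ 16^d * (d.factorial:ℝ) := by
      have hu : (0:ℝ) ≤ 1/(16*t) := by positivity
      have := aux_pow_exp d hu
      have hteq : t⁻¹ = 16 * (1/(16*t)) := by field_simp
      calc t⁻¹ ^ d * Real.exp (-(1/(16*t)))
          = 16^d * ((1/(16*t))^d * Real.exp (-(1/(16*t)))) := by
            rw [hteq, mul_pow]; ring
        _ ≤ 16^d * (d.factorial:ℝ) := by
            apply mul_le_mul_of_nonneg_left this (by positivity)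
    have hone : Real.exp (-(1/(16*t))) ≤ 1 := by
      apply Real.exp_le_one_iff.mpr
      have : (0:ℝ) ≤ 1/(16*t) := by positivity
      linarith
    have hrle : t ^ (-(d:ℝ)/2) ≤ t⁻¹ ^ d + 1 := aux_rpow_le d ht
    have hpow0 : (0:ℝ) ≤ (4*a)^d + 1 := by positivity
    calc (4 * π * t) ^ (-(d:ℝ)/2) * Real.exp (-(s - 2 * a * t)^2 / (4*t))
        ≤ t ^ (-(d:ℝ)/2) * Real.exp (-(1/(16*t))) :=
          mul_le_mul hsplit hexp2 (Real.exp_nonneg _) htpos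
      _ ≤ (t⁻¹ ^ d + 1) * Real.exp (-(1/(16*t))) :=
          mul_le_mul_of_nonneg_right hrle (Real.exp_nonneg _)
      _ = t⁻¹ ^ d * Real.exp (-(1/(16*t))) + Real.exp (-(1/(16*t))) := by ring
      _ ≤ 16^d * (d.factorial:ℝ) + 1 := add_le_add hkey hone
      _ ≤ (4*a)^d + 1 + (16^d * (d.factorial:ℝ) + 1) := by linarith

lemma aux_int_gauss (d : ℕ) {b : ℝ} (hb : 0 < b) :
    Integrable (fun y : EuclideanSpace ℝ (Fin d) ↦ Real.exp (-b * ‖y‖^2)) := by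
  refine ((aux_int_exp d hb).const_mul (Real.exp b)).mono'
    (Continuous.aestronglyMeasurable (by continuity)) ?_
  filter_upwards with y
  rw [Real.norm_eq_abs, abs_of_nonneg (Real.exp_nonneg _), ← Real.exp_add]
  apply Real.exp_le_exp.mpr
  nlinarith [sq_nonneg (‖y‖ - 1), hb.le, norm_nonneg y]

lemma aux_gauss_one (d : ℕ) {t : ℝ} (ht : 0 < t) :
    ∫ y : EuclideanSpace ℝ (Fin d),
      (4 * π * t) ^ (-(d:ℝ)/2) * Real.exp (-‖y‖^2 / (4 * t)) = 1 := by
  rw [MeasureTheory.integral_const_mul]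
  have hb : (0:ℝ) < (4*t)⁻¹ := by positivity
  have heq : (fun y : EuclideanSpace ℝ (Fin d) ↦ Real.exp (-‖y‖^2 / (4 * t)))
      = fun y ↦ Real.exp (-(4*t)⁻¹ * ‖y‖^2) := by
    funext y; congr 1; rw [neg_div, div_eq_inv_mul, neg_mul]
  rw [heq, GaussianFourier.integral_rexp_neg_mul_sq_norm hb]
  have hrank : (Module.finrank ℝ (EuclideanSpace ℝ (Fin d)) : ℝ) = (d:ℝ) := by
    simp [finrank_euclideanSpace_fin]
  rw [hrank]
  have hππ : (π / (4*t)⁻¹) = 4 * π * t := by field_simp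
  rw [hππ, ← Real.rpow_add (by positivity), neg_div, neg_add_cancel, Real.rpow_zero]

set_option maxHeartbeats 1000000 in
theorem killed_heat_semigroup_sup_bound (d : ℕ) (hd : 1 ≤ d) (γ : ℝ) (hγ : 0 < γ) :
    ∃ C : ℝ, ∀ φ : EuclideanSpace ℝ (Fin d) → ℝ,
      Continuous φ → (∀ z, 0 ≤ φ z) → (∃ K : ℝ, ∀ z, φ z ≤ K) →
      ∀ x : EuclideanSpace ℝ (Fin d), ∀ t : ℝ, 0 < t →
        Real.exp (-γ * t) *
            (∫ y : EuclideanSpace ℝ (Fin d),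
              (4 * π * t) ^ (-(d:ℝ)/2) * Real.exp (-‖y‖^2 / (4 * t)) * φ (x + y))
          ≤ sSup (φ '' Metric.closedBall x 1)
            + C * ∫ y : EuclideanSpace ℝ (Fin d),
                φ (x + y) * Real.exp (-Real.sqrt γ * ‖y‖) := by
  obtain ⟨C, hC0, hC⟩ := aux_kernel_bound d hγ
  refine ⟨C, ?_⟩
  intro φ hφc hφ0 hKex x t ht
  obtain ⟨K, hK⟩ := hKex
  set a := Real.sqrt γ with ha
  have ha0 : 0 < a := Real.sqrt_pos.mpr hγ
  have ha2 : a * a = γ := Real.mul_self_sqrt hγ.le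
  set S := sSup (φ '' Metric.closedBall x 1) with hS
  have hbdd : BddAbove (φ '' Metric.closedBall x 1) := by
    refine ⟨K, ?_⟩; rintro v ⟨z, _, rfl⟩; exact hK z
  have hS0 : 0 ≤ S :=
    (hφ0 x).trans (le_csSup hbdd ⟨x, Metric.mem_closedBall_self (by norm_num), rfl⟩)
  have hSb : ∀ y : EuclideanSpace ℝ (Fin d), ‖y‖ ≤ 1 → φ (x + y) ≤ S := by
    intro y hy
    refine le_csSup hbdd ⟨x + y, ?_, rfl⟩
    simpa [Metric.mem_closedBall, dist_eq_norm] using hy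
  have hP0 : (0:ℝ) ≤ (4 * π * t) ^ (-(d:ℝ)/2) :=
    Real.rpow_nonneg (by positivity) _
  -- integrabilities
  have hb4t : (0:ℝ) < (4*t)⁻¹ := by positivity
  have hint_gauss : Integrable
      (fun y : EuclideanSpace ℝ (Fin d) ↦
        (4 * π * t) ^ (-(d:ℝ)/2) * Real.exp (-‖y‖^2 / (4 * t))) := by
    have h := (aux_int_gauss d hb4t).const_mul ((4 * π * t) ^ (-(d:ℝ)/2))
    have harg : ∀ y : EuclideanSpace ℝ (Fin d), -(4*t)⁻¹ * ‖y‖^2 = -‖y‖^2 / (4*t) :=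
      fun y ↦ by rw [neg_div, div_eq_inv_mul, neg_mul]
    simpa only [harg] using h
  have hint_phie : Integrable
      (fun y : EuclideanSpace ℝ (Fin d) ↦ φ (x + y) * Real.exp (-a * ‖y‖)) := by
    refine ((aux_int_exp d ha0).const_mul K).mono'
      (Continuous.aestronglyMeasurable (by continuity)) ?_
    filter_upwards with y
    rw [Real.norm_eq_abs, abs_of_nonneg (mul_nonneg (hφ0 _) (Real.exp_nonneg _))]
    exact mul_le_mul_of_nonneg_right (hK _) (Real.exp_nonneg _)
  -- pointwise bound
  have hpt : ∀ y : EuclideanSpace ℝ (Fin d),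
      Real.exp (-γ * t) *
        ((4 * π * t) ^ (-(d:ℝ)/2) * Real.exp (-‖y‖^2 / (4 * t)) * φ (x + y))
      ≤ S * ((4 * π * t) ^ (-(d:ℝ)/2) * Real.exp (-‖y‖^2 / (4 * t)))
        + C * (φ (x + y) * Real.exp (-a * ‖y‖)) := by
    intro y
    have hE0 : (0:ℝ) ≤ Real.exp (-‖y‖^2 / (4 * t)) := Real.exp_nonneg _
    rcases le_or_gt ‖y‖ 1 with hy | hy
    · have t1 : Real.exp (-γ * t) ≤ 1 := by
        apply Real.exp_le_one_iff.mpr; nlinarith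
      have h2 : (0:ℝ) ≤ C * (φ (x + y) * Real.exp (-a * ‖y‖)) := by
        have := hφ0 (x + y); positivity
      calc Real.exp (-γ * t) *
            ((4 * π * t) ^ (-(d:ℝ)/2) * Real.exp (-‖y‖^2 / (4 * t)) * φ (x + y))
          ≤ 1 * ((4 * π * t) ^ (-(d:ℝ)/2) * Real.exp (-‖y‖^2 / (4 * t)) * φ (x + y)) := by
            apply mul_le_mul_of_nonneg_right t1
            exact mul_nonneg (mul_nonneg hP0 hE0) (hφ0 _)
        _ = ((4 * π * t) ^ (-(d:ℝ)/2) * Real.exp (-‖y‖^2 / (4 * t))) * φ (x + y) := by ring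
        _ ≤ ((4 * π * t) ^ (-(d:ℝ)/2) * Real.exp (-‖y‖^2 / (4 * t))) * S := by
            exact mul_le_mul_of_nonneg_left (hSb y hy) (mul_nonneg hP0 hE0)
        _ = S * ((4 * π * t) ^ (-(d:ℝ)/2) * Real.exp (-‖y‖^2 / (4 * t))) := by ring
        _ ≤ _ := le_add_of_nonneg_right h2
    · have hexpeq : -γ * t + -‖y‖^2 / (4 * t)
          = -(‖y‖ - 2 * a * t)^2 / (4*t) + -a * ‖y‖ := by
        field_simp
        ring_nf
        linear_combination (4 * t ^ 2) * ha2
      have hprod : Real.exp (-γ * t) * Real.exp (-‖y‖^2 / (4 * t))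
          = Real.exp (-(‖y‖ - 2 * a * t)^2 / (4*t)) * Real.exp (-a * ‖y‖) := by
        rw [← Real.exp_add, ← Real.exp_add, hexpeq]
      have hφy : (0:ℝ) ≤ φ (x + y) := hφ0 _
      calc Real.exp (-γ * t) *
            ((4 * π * t) ^ (-(d:ℝ)/2) * Real.exp (-‖y‖^2 / (4 * t)) * φ (x + y))
          = (Real.exp (-γ * t) * Real.exp (-‖y‖^2 / (4 * t)))
              * ((4 * π * t) ^ (-(d:ℝ)/2) * φ (x + y)) := by ring
        _ = ((4 * π * t) ^ (-(d:ℝ)/2) * Real.exp (-(‖y‖ - 2 * a * t)^2 / (4*t)))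
              * (φ (x + y) * Real.exp (-a * ‖y‖)) := by rw [hprod]; ring
        _ ≤ C * (φ (x + y) * Real.exp (-a * ‖y‖)) := by
            apply mul_le_mul_of_nonneg_right (hC t ht ‖y‖ hy.le)
            exact mul_nonneg hφy (Real.exp_nonneg _)
        _ ≤ _ := by
            apply le_add_of_nonneg_left
            exact mul_nonneg hS0 (mul_nonneg hP0 hE0)
  -- put everything together
  calc Real.exp (-γ * t) *
        (∫ y : EuclideanSpace ℝ (Fin d),
          (4 * π * t) ^ (-(d:ℝ)/2) * Real.exp (-‖y‖^2 / (4 * t)) * φ (x + y))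
      = ∫ y : EuclideanSpace ℝ (Fin d), Real.exp (-γ * t) *
          ((4 * π * t) ^ (-(d:ℝ)/2) * Real.exp (-‖y‖^2 / (4 * t)) * φ (x + y)) :=
        (MeasureTheory.integral_const_mul _ _).symm
    _ ≤ ∫ y : EuclideanSpace ℝ (Fin d),
          (S * ((4 * π * t) ^ (-(d:ℝ)/2) * Real.exp (-‖y‖^2 / (4 * t)))
            + C * (φ (x + y) * Real.exp (-a * ‖y‖))) := by
        apply MeasureTheory.integral_mono_of_nonneg
        · filter_upwards with y
          have := hφ0 (x + y)
          have hE0 : (0:ℝ) ≤ Real.exp (-‖y‖^2 / (4 * t)) := Real.exp_nonneg _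
          positivity
        · exact (hint_gauss.const_mul S).add (hint_phie.const_mul C)
        · filter_upwards with y using hpt y
    _ = S * (∫ y : EuclideanSpace ℝ (Fin d),
            (4 * π * t) ^ (-(d:ℝ)/2) * Real.exp (-‖y‖^2 / (4 * t)))
          + C * ∫ y : EuclideanSpace ℝ (Fin d), φ (x + y) * Real.exp (-a * ‖y‖) := by
        rw [MeasureTheory.integral_add (hint_gauss.const_mul S) (hint_phie.const_mul C),
          MeasureTheory.integral_const_mul S, MeasureTheory.integral_const_mul C]
    _ = S + C * ∫ y : EuclideanSpace ℝ (Fin d), φ (x + y) * Real.exp (-a * ‖y‖) := by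
        rw [aux_gauss_one d ht, mul_one]
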